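/- In Hamilton's quaternions ℍ(−1,−1), let b ∈ ℝ and c ∉ ℝ with c = c₀ + c₁e₁ + c₂e₂ + c₃e₃, and set m = √((b² − 4c₀ + √((b² − 4c₀)² + 16(c₁² + c₂² + c₃²)))/2). Then x = −b/2 + m/2 − (c₁/m)e₁ − (c₂/m)e₂ − (c₃/m)e₃ satisfies x² + bx + c = 0. -/

import Mathlib

open Quaternion

theorem case3_solution (b c₀ c₁ c₂ c₃ m : ℝ) (x c : ℍ[ℝ])
    (hc : ¬(c₁ = 0 ∧ c₂ = 0 ∧ c₃ = 0))
    (hcdef : c = ⟨c₀, c₁, c₂, c₃⟩)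
    (hm : m = Real.sqrt ((b ^ 2 - 4 * c₀ +
      Real.sqrt ((b ^ 2 - 4 * c₀) ^ 2 + 16 * (c₁ ^ 2 + c₂ ^ 2 + c₃ ^ 2))) / 2))
    (hx : x = ⟨-b / 2 + m / 2, -c₁ / m, -c₂ / m, -c₃ / m⟩) :
    x ^ 2 + (b : ℍ[ℝ]) * x + c = 0 := by
  set A := b ^ 2 - 4 * c₀ with hA
  set S := c₁ ^ 2 + c₂ ^ 2 + c₃ ^ 2 with hS
  have hSpos : 0 < S := by
    rcases not_and_or.mp hc with h | h
    · positivity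
    rcases not_and_or.mp (by simpa using h) with h | h <;> positivity
  have hrad : (0:ℝ) ≤ A ^ 2 + 16 * S := by positivity
  have hsq : Real.sqrt (A ^ 2 + 16 * S) ^ 2 = A ^ 2 + 16 * S := Real.sq_sqrt hrad
  have hgt : -A < Real.sqrt (A ^ 2 + 16 * S) := by
    have h1 : |A| < Real.sqrt (A ^ 2 + 16 * S) := by
      have : Real.sqrt (A ^ 2) < Real.sqrt (A ^ 2 + 16 * S) :=
        Real.sqrt_lt_sqrt (by positivity) (by linarith)
      simpa [Real.sqrt_sq_eq_abs] using this
    linarith [neg_abs_le A]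
  have harg : (0:ℝ) < (A + Real.sqrt (A ^ 2 + 16 * S)) / 2 := by linarith
  have hmpos : 0 < m := by rw [hm]; exact Real.sqrt_pos.mpr harg
  have hm2 : m ^ 2 = (A + Real.sqrt (A ^ 2 + 16 * S)) / 2 := by
    rw [hm, Real.sq_sqrt harg.le]
  have hm4 : m ^ 4 = A * m ^ 2 + 4 * S := by
    have h2 : 2 * m ^ 2 - A = Real.sqrt (A ^ 2 + 16 * S) := by rw [hm2]; ring
    have h3 : (2 * m ^ 2 - A) ^ 2 = A ^ 2 + 16 * S := by rw [h2, hsq]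
    nlinarith [h3]
  have hmne : m ≠ 0 := hmpos.ne'
  have xr : x.re = -b / 2 + m / 2 := by subst hx; rfl
  have xi : x.imI = -c₁ / m := by subst hx; rfl
  have xj : x.imJ = -c₂ / m := by subst hx; rfl
  have xk : x.imK = -c₃ / m := by subst hx; rfl
  have cr : c.re = c₀ := by subst hcdef; rfl
  have ci : c.imI = c₁ := by subst hcdef; rfl
  have cj : c.imJ = c₂ := by subst hcdef; rfl
  have ck : c.imK = c₃ := by subst hcdef; rfl
  apply Quaternion.ext <;> simp only [pow_two, Quaternion.re_mul, Quaternion.imI_mul, Quaternion.imJ_mul,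
    Quaternion.imK_mul, Quaternion.re_add, Quaternion.imI_add, Quaternion.imJ_add,
    Quaternion.imK_add, Quaternion.re_coe, Quaternion.imI_coe, Quaternion.imJ_coe,
    Quaternion.imK_coe, Quaternion.re_zero, Quaternion.imI_zero, Quaternion.imJ_zero,
    Quaternion.imK_zero, xr, xi, xj, xk, cr, ci, cj, ck] <;> field_simp <;> ring_nf
  · linear_combination hm4
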